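/- Let X_1,...,X_n be negatively associated Bernoulli random variables with X = Σ_i X_i and μ = Σ_i P(X_i = 1). Then for every z > 1, E[z^X] ≤ exp(μ(z−1)). -/

import Mathlib

open MeasureTheory Finset

/-- For negatively associated Bernoulli random variables with `X = ∑ Xᵢ` and
`μ₀ = ∑ P(Xᵢ = 1)`, one has `E[z^X] ≤ exp(μ₀ (z - 1))` for every `z > 1`. -/
theorem neg_assoc_bernoulli_mgf
    {Ω : Type*} [MeasurableSpace Ω] (μ : Measure Ω) [IsProbabilityMeasure μ]
    (n : ℕ) (X : Fin n → Ω → ℕ)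
    (hmeas : ∀ i, Measurable (X i))
    (hBer : ∀ i ω, X i ω ≤ 1)
    (hNA : ∀ s : Finset (Fin n),
      μ {ω | ∀ i ∈ s, X i ω = 1} ≤ ∏ i ∈ s, μ {ω | X i ω = 1})
    (z : ℝ) (hz : 1 < z) :
    ∫ ω, z ^ (∑ i, X i ω) ∂μ ≤
      Real.exp ((∑ i, (μ {ω | X i ω = 1}).toReal) * (z - 1)) := by
  classical
  set p : Fin n → ℝ := fun i => (μ {ω | X i ω = 1}).toReal with hp
  have hp0 : ∀ i, 0 ≤ p i := fun i => ENNReal.toReal_nonneg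
  set S : Finset (Fin n) → Set Ω := fun t => {ω | ∀ i ∈ t, X i ω = 1} with hS
  have hSmeas : ∀ t : Finset (Fin n), MeasurableSet (S t) := by
    intro t
    have : S t = ⋂ i ∈ t, {ω | X i ω = 1} := by ext ω; simp [hS]
    rw [this]
    exact MeasurableSet.biInter t.countable_toSet
      (fun i _ => (hmeas i) (measurableSet_singleton 1))
  have hz0 : (0:ℝ) ≤ z - 1 := by linarith
  -- pointwise identity
  have key : ∀ ω, (z : ℝ) ^ (∑ i, X i ω) =
      ∑ t ∈ (univ : Finset (Fin n)).powerset,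
        (z - 1) ^ t.card * Set.indicator (S t) (fun _ => (1:ℝ)) ω := by
    intro ω
    have h1 : (z : ℝ) ^ (∑ i, X i ω) = ∏ i, ((z - 1) * (X i ω : ℝ) + 1) := by
      rw [← Finset.prod_pow_eq_pow_sum]
      refine Finset.prod_congr rfl fun i _ => ?_
      have hb := hBer i ω
      interval_cases (X i ω)
      · simp
      · simp
    have h2 : ∀ t : Finset (Fin n),
        (∏ i ∈ t, (X i ω : ℝ)) = Set.indicator (S t) (fun _ => (1:ℝ)) ω := by
      intro t
      by_cases hω : ω ∈ S t
      · rw [Set.indicator_of_mem hω]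
        refine Finset.prod_eq_one fun i hi => by rw [hω i hi]; norm_num
      · rw [Set.indicator_of_notMem hω]
        simp only [hS, Set.mem_setOf_eq, not_forall] at hω
        obtain ⟨i, hi, hne⟩ := hω
        refine Finset.prod_eq_zero hi ?_
        have := hBer i ω
        have : X i ω = 0 := by omega
        simp [this]
    rw [h1, Finset.prod_add]
    refine Finset.sum_congr rfl fun t ht => ?_
    rw [Finset.prod_const_one, mul_one, Finset.prod_mul_distrib,
      Finset.prod_const, h2]
  have hint : ∀ t : Finset (Fin n),
      Integrable (fun ω => (z - 1) ^ t.card * Set.indicator (S t) (fun _ => (1:ℝ)) ω) μ := by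
    intro t
    exact (((integrable_const (1:ℝ)).indicator (hSmeas t)).const_mul _)
  have hIeq : ∫ ω, z ^ (∑ i, X i ω) ∂μ =
      ∑ t ∈ (univ : Finset (Fin n)).powerset, (z - 1) ^ t.card * (μ (S t)).toReal := by
    calc ∫ ω, z ^ (∑ i, X i ω) ∂μ
        = ∫ ω, ∑ t ∈ (univ : Finset (Fin n)).powerset,
            (z - 1) ^ t.card * Set.indicator (S t) (fun _ => (1:ℝ)) ω ∂μ := by
          exact integral_congr_ae (Filter.Eventually.of_forall key)
      _ = ∑ t ∈ (univ : Finset (Fin n)).powerset,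
            ∫ ω, (z - 1) ^ t.card * Set.indicator (S t) (fun _ => (1:ℝ)) ω ∂μ :=
          integral_finset_sum _ fun t _ => hint t
      _ = ∑ t ∈ (univ : Finset (Fin n)).powerset, (z - 1) ^ t.card * (μ (S t)).toReal := by
          refine Finset.sum_congr rfl fun t _ => ?_
          rw [integral_const_mul]
          congr 1
          have h := integral_indicator_one (μ := μ) (hSmeas t); rw [measureReal_def] at h; exact h
  have hbound : ∀ t : Finset (Fin n), (μ (S t)).toReal ≤ ∏ i ∈ t, p i := by
    intro t
    have hfin : (∏ i ∈ t, μ {ω | X i ω = 1}) ≠ ⊤ := by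
      exact (ENNReal.prod_lt_top fun i _ => (measure_lt_top μ _)).ne
    calc (μ (S t)).toReal ≤ (∏ i ∈ t, μ {ω | X i ω = 1}).toReal :=
          ENNReal.toReal_mono hfin (hNA t)
      _ = ∏ i ∈ t, p i := ENNReal.toReal_prod _ _
  calc ∫ ω, z ^ (∑ i, X i ω) ∂μ
      = ∑ t ∈ (univ : Finset (Fin n)).powerset, (z - 1) ^ t.card * (μ (S t)).toReal := hIeq
    _ ≤ ∑ t ∈ (univ : Finset (Fin n)).powerset, (z - 1) ^ t.card * ∏ i ∈ t, p i := by
        refine Finset.sum_le_sum fun t _ => ?_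
        exact mul_le_mul_of_nonneg_left (hbound t) (pow_nonneg hz0 _)
    _ = ∏ i, ((z - 1) * p i + 1) := by
        rw [Finset.prod_add]
        refine Finset.sum_congr rfl fun t ht => ?_
        rw [Finset.prod_const_one, mul_one, Finset.prod_mul_distrib, Finset.prod_const]
    _ ≤ ∏ i, Real.exp ((z - 1) * p i) := by
        refine Finset.prod_le_prod (fun i _ => by positivity) fun i _ => ?_
        exact Real.add_one_le_exp _
    _ = Real.exp ((∑ i, p i) * (z - 1)) := by
        rw [← Real.exp_sum]
        congr 1
        rw [Finset.sum_mul]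
        exact Finset.sum_congr rfl fun i _ => mul_comm _ _
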